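/- Under the statistics hypotheses, the function m_h (equal to the divided difference ([x·h(x) − H(x)] − [y·h(y) − H(y)])/(h(x) − h(y)) off the diagonal and to x on the diagonal) is continuous on (0,a) × (0,a); in particular, for every z ∈ (0,a), m_h(x,y) → z as (x,y) → (z,z) within (0,a) × (0,a). -/

import Mathlib

open scoped Interval Topology

/-- The set of admissible densities `I_h = (0, a)`, where `a ∈ (0, +∞]`. -/
def Ih (a : EReal) : Set ℝ := {x : ℝ | 0 < x ∧ (x : EReal) < a}

/-- The antiderivative `H(x) = ∫₁ˣ h(s) ds` of the statistics function. -/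
noncomputable def Hfun (h : ℝ → ℝ) (x : ℝ) : ℝ := ∫ s in (1:ℝ)..x, h s

/-- The mean function `m_h`, given by the divided difference of `x ↦ x h(x) - H(x)`
with respect to `h` off the diagonal. -/
noncomputable def mh (h H : ℝ → ℝ) (x y : ℝ) : ℝ :=
  if x = y then x else ((x * h x - H x) - (y * h y - H y)) / (h x - h y)

/-- Under the statistics hypotheses, `m_h` is continuous on `(0,a) × (0,a)`;
in particular it tends to `z` at every diagonal point `(z, z)`. -/
theorem mh_continuousOn
    (a : EReal) (ha : 0 < a) (ha1 : ((1:ℝ) : EReal) < a)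
    (h h' : ℝ → ℝ)
    (hderiv : ∀ x ∈ Ih a, HasDerivAt h (h' x) x)
    (hcont : ContinuousOn h' (Ih a))
    (hpos : ∀ x ∈ Ih a, 0 < h' x)
    (hbij : Set.BijOn h (Ih a) Set.univ) :
    ContinuousOn (fun p : ℝ × ℝ => mh h (Hfun h) p.1 p.2) (Ih a ×ˢ Ih a) ∧
    ∀ z ∈ Ih a,
      Filter.Tendsto (fun p : ℝ × ℝ => mh h (Hfun h) p.1 p.2)
        (𝓝[Ih a ×ˢ Ih a] (z, z)) (𝓝 z) := by
  have hopen : IsOpen (Ih a) := by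
    have : Ih a = Set.Ioi 0 ∩ (fun x : ℝ => (x : EReal)) ⁻¹' Set.Iio a := rfl
    rw [this]
    exact isOpen_Ioi.inter (isOpen_Iio.preimage continuous_coe_real_ereal)
  have hord : ∀ {x y t : ℝ}, x ∈ Ih a → y ∈ Ih a → t ∈ Set.Icc x y → t ∈ Ih a := by
    rintro x y t ⟨hx0, hxa⟩ ⟨hy0, hya⟩ ⟨hxt, hty⟩
    exact ⟨lt_of_lt_of_le hx0 hxt, lt_of_le_of_lt (EReal.coe_le_coe_iff.2 hty) hya⟩
  have hc : ContinuousOn h (Ih a) := fun x hx => (hderiv x hx).continuousAt.continuousWithinAt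
  have h1 : (1 : ℝ) ∈ Ih a := ⟨one_pos, ha1⟩
  have hinj : Set.InjOn h (Ih a) := hbij.injOn
  have hHderiv : ∀ x ∈ Ih a, HasDerivAt (Hfun h) (h x) x := by
    intro x hx
    have hsub : Set.uIcc 1 x ⊆ Ih a := by
      intro t ht
      rcases le_total 1 x with hle | hle
      · exact hord h1 hx (by rwa [Set.uIcc_of_le hle] at ht)
      · exact hord hx h1 (by rwa [Set.uIcc_of_ge hle] at ht)
    have hint : IntervalIntegrable h MeasureTheory.volume 1 x :=
      (hc.mono hsub).intervalIntegrable
    have hmeas : StronglyMeasurableAtFilter h (𝓝 x) :=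
      hc.stronglyMeasurableAtFilter hopen x hx
    exact intervalIntegral.integral_hasDerivAt_right hint hmeas (hderiv x hx).continuousAt
  set F : ℝ → ℝ := fun x => x * h x - Hfun h x with hF
  have hFderiv : ∀ x ∈ Ih a, HasDerivAt F (x * h' x) x := by
    intro x hx
    have h1' := ((hasDerivAt_id x).mul (hderiv x hx)).sub (hHderiv x hx)
    have h2 : HasDerivAt F (1 * h x + id x * h' x - h x) x := h1'
    convert h2 using 1
    simp only [id_eq]
    ring
  have key : ∀ x ∈ Ih a, ∀ y ∈ Ih a, x < y → mh h (Hfun h) x y ∈ Set.Ioo x y := by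
    intro x hx y hy hxy
    have hIcc : Set.Icc x y ⊆ Ih a := fun t ht => hord hx hy ht
    obtain ⟨c, hc', heq⟩ := exists_ratio_hasDerivAt_eq_ratio_slope F (fun t => t * h' t) hxy
      (fun t ht => (hFderiv t (hIcc ht)).continuousAt.continuousWithinAt)
      (fun t ht => hFderiv t (hIcc (Set.Ioo_subset_Icc_self ht)))
      h h' (fun t ht => (hderiv t (hIcc ht)).continuousAt.continuousWithinAt)
      (fun t ht => hderiv t (hIcc (Set.Ioo_subset_Icc_self ht)))
    have hne : h x ≠ h y := fun hh => hxy.ne (hinj hx hy hh)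
    have hcpos : 0 < h' c := hpos c (hIcc (Set.Ioo_subset_Icc_self hc'))
    have heq2 : (h y - h x) * c = F y - F x := by
      refine mul_right_cancel₀ hcpos.ne' ?_
      rw [mul_assoc]; exact heq
    have hval : mh h (Hfun h) x y = c := by
      unfold mh
      rw [if_neg hxy.ne]
      have hhne : h x - h y ≠ 0 := sub_ne_zero.2 hne
      rw [div_eq_iff hhne]
      simp only [hF] at heq2
      linear_combination heq2
    rw [hval]
    exact hc'
  have hsymm : ∀ x y : ℝ, mh h (Hfun h) x y = mh h (Hfun h) y x := by
    intro x y
    rcases eq_or_ne x y with rfl | hne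
    · rfl
    · unfold mh
      rw [if_neg hne, if_neg hne.symm, ← neg_div_neg_eq]
      congr 1 <;> ring
  have keyu : ∀ p ∈ Ih a ×ˢ Ih a, mh h (Hfun h) p.1 p.2 ∈ Set.uIcc p.1 p.2 := by
    rintro ⟨x, y⟩ ⟨hx, hy⟩
    rcases lt_trichotomy x y with hlt | heq | hlt
    · exact Set.Icc_subset_uIcc (Set.Ioo_subset_Icc_self (key x hx y hy hlt))
    · subst heq
      simp [mh]
    · rw [hsymm, Set.uIcc_comm]
      exact Set.Icc_subset_uIcc (Set.Ioo_subset_Icc_self (key y hy x hx hlt))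
  have htend : ∀ z ∈ Ih a,
      Filter.Tendsto (fun p : ℝ × ℝ => mh h (Hfun h) p.1 p.2)
        (𝓝[Ih a ×ˢ Ih a] (z, z)) (𝓝 z) := by
    intro z hz
    have hmin : Filter.Tendsto (fun p : ℝ × ℝ => min p.1 p.2)
        (𝓝[Ih a ×ˢ Ih a] (z, z)) (𝓝 z) := by
      have := (continuous_fst.min continuous_snd).tendsto ((z, z) : ℝ × ℝ)
      simpa using this.mono_left nhdsWithin_le_nhds
    have hmax : Filter.Tendsto (fun p : ℝ × ℝ => max p.1 p.2)
        (𝓝[Ih a ×ˢ Ih a] (z, z)) (𝓝 z) := by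
      have := (continuous_fst.max continuous_snd).tendsto ((z, z) : ℝ × ℝ)
      simpa using this.mono_left nhdsWithin_le_nhds
    refine tendsto_of_tendsto_of_tendsto_of_le_of_le' hmin hmax ?_ ?_
    · filter_upwards [self_mem_nhdsWithin] with p hp
      have := keyu p hp
      rw [Set.uIcc, Set.mem_Icc] at this
      exact this.1
    · filter_upwards [self_mem_nhdsWithin] with p hp
      have := keyu p hp
      rw [Set.uIcc, Set.mem_Icc] at this
      exact this.2
  constructor
  · rintro ⟨x, y⟩ ⟨hx, hy⟩
    rcases eq_or_ne x y with rfl | hne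
    · have hx0 : (fun p : ℝ × ℝ => mh h (Hfun h) p.1 p.2) (x, x) = x := by simp [mh]
      have := htend x hx
      unfold ContinuousWithinAt
      rw [hx0]
      exact this
    · have hFc : ContinuousOn F (Ih a) :=
        fun t ht => (hFderiv t ht).continuousAt.continuousWithinAt
      have c1 : ContinuousWithinAt (fun p : ℝ × ℝ => F p.1) (Ih a ×ˢ Ih a) (x, y) :=
        (hFc x hx).comp (g := F) (f := Prod.fst) continuousWithinAt_fst fun q (hq : q ∈ Ih a ×ˢ Ih a) => hq.1
      have c2 : ContinuousWithinAt (fun p : ℝ × ℝ => F p.2) (Ih a ×ˢ Ih a) (x, y) :=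
        (hFc y hy).comp (g := F) (f := Prod.snd) continuousWithinAt_snd fun q (hq : q ∈ Ih a ×ˢ Ih a) => hq.2
      have c3 : ContinuousWithinAt (fun p : ℝ × ℝ => h p.1) (Ih a ×ˢ Ih a) (x, y) :=
        (hc x hx).comp continuousWithinAt_fst fun q hq => hq.1
      have c4 : ContinuousWithinAt (fun p : ℝ × ℝ => h p.2) (Ih a ×ˢ Ih a) (x, y) :=
        (hc y hy).comp continuousWithinAt_snd fun q hq => hq.2
      have hne' : h x - h y ≠ 0 := sub_ne_zero.2 fun hh => hne (hinj hx hy hh)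
      have cq : ContinuousWithinAt
          (fun p : ℝ × ℝ => (F p.1 - F p.2) / (h p.1 - h p.2)) (Ih a ×ˢ Ih a) (x, y) :=
        (c1.sub c2).div (c3.sub c4) hne'
      have hopen' : IsOpen {p : ℝ × ℝ | p.1 ≠ p.2} :=
        isOpen_ne_fun continuous_fst continuous_snd
      refine cq.congr_of_eventuallyEq ?_ ?_
      · filter_upwards [nhdsWithin_le_nhds (hopen'.mem_nhds hne)] with p hp
        simp only [mh, if_neg hp, hF]
      · simp only [mh, if_neg hne, hF]
  · exact htend
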